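/- For every real t ≥ 0 and every x = (x_1,…,x_d) ∈ ℤ^d, the discrete heat kernel satisfies e^{−2td} · t^{|x|} / (∏_{i=1}^d |x_i|!) ≤ p_t(0, x) ≤ t^{|x|} / (∏_{i=1}^d |x_i|!). -/

import Mathlib

set_option synthInstance.maxHeartbeats 1000000
set_option maxHeartbeats 2000000


noncomputable section

open scoped ENNReal BigOperators

namespace Paper

variable {α : Type*}

/-- The real Hilbert space `ℓ²` over the index set `α`. -/
abbrev L2 (α : Type*) := lp (fun _ : α => ℝ) 2

lemma memℓp_comp (e : α ≃ α) (f : L2 α) : Memℓp (fun x => f (e x)) (2 : ℝ≥0∞) := by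
  have h2 : (0:ℝ) < (2 : ℝ≥0∞).toReal := by norm_num
  rw [memℓp_gen_iff h2]
  have hf := lp.memℓp f
  rw [memℓp_gen_iff h2] at hf
  exact (e.summable_iff (f := fun i => ‖f i‖ ^ (2 : ℝ≥0∞).toReal)).2 hf

/-- Reindexing along an equivalence of the index set, as a bounded operator on `ℓ²`. -/
def shiftCLM (e : α ≃ α) : L2 α →L[ℝ] L2 α :=
  LinearMap.mkContinuous
    { toFun := fun f => ⟨fun x => f (e x), memℓp_comp e f⟩
      map_add' := by
        intro f g; apply lp.ext; funext x; simp [lp.coeFn_add]; rfl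
      map_smul' := by
        intro c f; apply lp.ext; funext x; simp [lp.coeFn_smul] }
    1
    (by
      intro f
      rw [one_mul]
      have h2 : (0:ℝ) < (2 : ℝ≥0∞).toReal := by norm_num
      have key : ∀ g : L2 α, ‖g‖ = (∑' i, ‖g i‖ ^ (2 : ℝ≥0∞).toReal) ^ ((2 : ℝ≥0∞).toReal)⁻¹ := by
        intro g
        rw [lp.norm_eq_tsum_rpow h2 g, one_div]
      rw [key, key]
      refine le_of_eq (congrArg (· ^ ((2 : ℝ≥0∞).toReal)⁻¹) ?_)
      exact e.tsum_eq (f := fun i => ‖f i‖ ^ (2 : ℝ≥0∞).toReal))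

@[simp] lemma shiftCLM_apply (e : α ≃ α) (f : L2 α) (x : α) :
    shiftCLM e f x = f (e x) := rfl

/-- The discrete Laplacian on `ℤ^d`, as a bounded operator on `ℓ²(ℤ^d)`:
`(Δ f)(x) = ∑_{y ∈ N(x)} f(y) - 2d f(x)`, where the set `N(x)` of nearest neighbors of
`x` (points of `ℤ^d` at Euclidean distance 1 from `x`) consists of the `2d` points
`x ± eᵢ`, `1 ≤ i ≤ d`. -/
def discreteLaplacian (d : ℕ) : L2 (Fin d → ℤ) →L[ℝ] L2 (Fin d → ℤ) :=
  (∑ i : Fin d,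
      (shiftCLM (Equiv.addRight (Pi.single i 1 : Fin d → ℤ)) +
       shiftCLM (Equiv.addRight (-Pi.single i 1 : Fin d → ℤ))))
  - (2 * (d : ℝ)) • ContinuousLinearMap.id ℝ (L2 (Fin d → ℤ))

/-- The discrete heat kernel `p_t(x,y) := (exp(tΔ) δ_y)(x)` on `ℤ^d`, where `exp` is the
exponential of bounded operators and `δ_y ∈ ℓ²(ℤ^d)` is the indicator function of `y`. -/
def heatKernel (d : ℕ) (t : ℝ) (x y : Fin d → ℤ) : ℝ :=
  (NormedSpace.exp (t • discreteLaplacian d) (lp.single 2 y (1:ℝ))) x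

/-- The generator of continuous-time simple symmetric random walk on `ℤ` with jump
rate `lam`: `(Q_lam f)(x) = (lam/2)(f(x+1)+f(x-1)) - lam·f(x)`. -/
def walkGen (lam : ℝ) : L2 ℤ →L[ℝ] L2 ℤ :=
  (lam / 2) • (shiftCLM (Equiv.addRight (1:ℤ)) + shiftCLM (Equiv.addRight (-1:ℤ)))
    - lam • ContinuousLinearMap.id ℝ (L2 ℤ)

/-- `p_t^{(lam)}(x) := (exp(t Q_lam) δ_0)(x)`, the transition probability of the
rate-`lam` continuous-time simple symmetric random walk on `ℤ` started at `0`. -/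
def walkKernel (lam : ℝ) (t : ℝ) (x : ℤ) : ℝ :=
  (NormedSpace.exp (t • walkGen lam) (lp.single 2 (0:ℤ) (1:ℝ))) x

/-- `|x| = ∑ᵢ |xᵢ|` for `x ∈ ℤ^d`. -/
def l1norm {d : ℕ} (x : Fin d → ℤ) : ℕ := ∑ i, (x i).natAbs

end Paper
open Paper

namespace HK
open Finset

variable {d : ℕ}

abbrev G (d : ℕ) := Fin d → ℤ

/-- evaluation at a point as a CLM -/
def ev (y : G d) : L2 (G d) →L[ℝ] ℝ :=
  LinearMap.mkContinuous
    { toFun := fun f => f y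
      map_add' := fun f g => by simp [lp.coeFn_add]
      map_smul' := fun c f => by simp [lp.coeFn_smul] }
    1
    (fun f => by
      show ‖f y‖ ≤ 1 * ‖f‖
      simpa using lp.norm_apply_le_norm (by norm_num : (2:ℝ≥0∞) ≠ 0) f y)

@[simp] lemma ev_apply (y : G d) (f : L2 (G d)) : ev y f = f y := rfl

lemma delta_apply (x w : G d) : (lp.single 2 x (1:ℝ) : L2 (G d)) w = if w = x then 1 else 0 := by
  by_cases h : w = x
  · subst h; simp [lp.single_apply_self]
  · simp [lp.single_apply_ne _ _ _ h, h]

def shiftHom (d : ℕ) : Multiplicative (G d) →* (L2 (G d) →L[ℝ] L2 (G d)) where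
  toFun v := shiftCLM (Equiv.addRight (Multiplicative.toAdd v))
  map_one' := by
    refine ContinuousLinearMap.ext fun f => ?_
    apply lp.ext; funext x
    simp
  map_mul' a b := by
    refine ContinuousLinearMap.ext fun f => ?_
    apply lp.ext; funext x
    simp [ContinuousLinearMap.mul_apply, add_assoc]

def vj (d : ℕ) (j : Fin d × Bool) : G d := if j.2 then Pi.single j.1 1 else -Pi.single j.1 1

def SOp (d : ℕ) : L2 (G d) →L[ℝ] L2 (G d) :=
  ∑ j : Fin d × Bool, shiftHom d (Multiplicative.ofAdd (vj d j))

lemma laplacian_eq (d : ℕ) :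
    discreteLaplacian d = SOp d - (2 * (d:ℝ)) • ContinuousLinearMap.id ℝ (L2 (G d)) := by
  unfold discreteLaplacian SOp
  congr 1
  rw [Fintype.sum_prod_type]
  refine Finset.sum_congr rfl fun i _ => ?_
  rw [Fintype.sum_bool]
  rfl

abbrev MA (d : ℕ) := MonoidAlgebra ℝ (Multiplicative (G d))

abbrev AHom (d : ℕ) : MA d →ₐ[ℝ] (L2 (G d) →L[ℝ] L2 (G d)) :=
  MonoidAlgebra.lift ℝ _ (Multiplicative (G d)) (shiftHom d)

lemma ev_AHom (x : G d) (p : MA d) :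
    ev 0 (AHom d p (lp.single 2 x (1:ℝ))) = p.coeff (Multiplicative.ofAdd x) := by
  induction p using MonoidAlgebra.induction_linear with
  | zero => simp
  | add p q hp hq => simp [map_add, ContinuousLinearMap.add_apply, lp.coeFn_add, hp, hq]
  | single g c =>
    rw [MonoidAlgebra.lift_single]
    show ev 0 ((c • shiftHom d g) (lp.single 2 x (1:ℝ))) = _
    rw [ContinuousLinearMap.smul_apply, map_smul]
    have : ev (0 : G d) ((shiftHom d g) (lp.single 2 x (1:ℝ)))
        = if g = Multiplicative.ofAdd x then (1:ℝ) else 0 := by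
      show (lp.single 2 x (1:ℝ) : L2 (G d)) ((Equiv.addRight (Multiplicative.toAdd g)) 0) = _
      have h0 : (Equiv.addRight (Multiplicative.toAdd g)) 0 = Multiplicative.toAdd g :=
        zero_add _
      rw [h0, delta_apply]
      by_cases h : Multiplicative.toAdd g = x
      · rw [if_pos h, if_pos (by rw [← h]; rfl)]
      · rw [if_neg h, if_neg (fun hg => h (by rw [hg]; rfl))]
    rw [this, MonoidAlgebra.coeff_single, Finsupp.single_apply]
    by_cases h : g = Multiplicative.ofAdd x <;> simp [h]

def Wval (d : ℕ) (n : ℕ) (x : G d) : ℝ :=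
  ∑ k ∈ Finset.piAntidiag Finset.univ n,
    (Nat.multinomial Finset.univ k : ℝ) *
      (if (∑ j : Fin d × Bool, k j • vj d j) = x then 1 else 0)

lemma ev_SOp_pow (n : ℕ) (x : G d) :
    ev 0 ((SOp d ^ n) (lp.single 2 x (1:ℝ))) = Wval d n x := by
  have hof : ∀ j : Fin d × Bool,
      AHom d (MonoidAlgebra.of ℝ (Multiplicative (G d)) (Multiplicative.ofAdd (vj d j)))
        = shiftHom d (Multiplicative.ofAdd (vj d j)) := fun j => MonoidAlgebra.lift_of _ _
  have hS : SOp d = AHom d (∑ j : Fin d × Bool,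
      MonoidAlgebra.of ℝ (Multiplicative (G d)) (Multiplicative.ofAdd (vj d j))) := by
    rw [map_sum]
    exact (Finset.sum_congr rfl fun j _ => (hof j).symm)
  rw [hS, ← map_pow, ev_AHom, Finset.sum_pow_eq_sum_piAntidiag, MonoidAlgebra.coeff_sum, Finsupp.finset_sum_apply]
  refine Finset.sum_congr rfl fun k hk => ?_
  have hprod : (∏ j : Fin d × Bool,
      (MonoidAlgebra.of ℝ (Multiplicative (G d)) (Multiplicative.ofAdd (vj d j))) ^ (k j))
      = MonoidAlgebra.of ℝ (Multiplicative (G d))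
          (Multiplicative.ofAdd (∑ j : Fin d × Bool, k j • vj d j)) := by
    rw [show (∏ j : Fin d × Bool,
        (MonoidAlgebra.of ℝ (Multiplicative (G d)) (Multiplicative.ofAdd (vj d j))) ^ (k j))
        = ∏ j : Fin d × Bool,
        (MonoidAlgebra.of ℝ (Multiplicative (G d)) ((Multiplicative.ofAdd (vj d j)) ^ (k j)))
      from Finset.prod_congr rfl fun j _ => (map_pow _ _ _).symm]
    rw [← map_prod]
    congr 1 <;> simp only [← ofAdd_nsmul, ← ofAdd_sum]
  rw [hprod, ← nsmul_eq_mul, MonoidAlgebra.of_apply, MonoidAlgebra.coeff_smul, Finsupp.smul_apply,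
    MonoidAlgebra.coeff_single, Finsupp.single_apply]
  simp only [EmbeddingLike.apply_eq_iff_eq]
  by_cases hc : (∑ j : Fin d × Bool, k j • vj d j) = x <;> simp [hc]

lemma exp_smul_one (c : ℝ) :
    NormedSpace.exp (c • (1 : L2 (G d) →L[ℝ] L2 (G d)))
      = Real.exp c • (1 : L2 (G d) →L[ℝ] L2 (G d)) := by
  rw [← Algebra.algebraMap_eq_smul_one, ← NormedSpace.algebraMap_exp_comm,
    Real.exp_eq_exp_ℝ, Algebra.algebraMap_eq_smul_one]

lemma exp_split (d : ℕ) (t : ℝ) :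
    NormedSpace.exp (t • discreteLaplacian d)
      = Real.exp (-(2 * t * d)) • NormedSpace.exp (t • SOp d) := by
  have h1 : t • discreteLaplacian d
      = t • SOp d + (-(2 * t * d)) • (1 : L2 (G d) →L[ℝ] L2 (G d)) := by
    rw [laplacian_eq, smul_sub, smul_smul, sub_eq_add_neg, ← neg_smul,
      ContinuousLinearMap.one_def]
    have : -(t * (2 * (d:ℝ))) = -(2 * t * d) := by ring
    rw [this]
  have hb : ∀ z : L2 (G d) →L[ℝ] L2 (G d),
      z ∈ EMetric.ball (0 : L2 (G d) →L[ℝ] L2 (G d)) (NormedSpace.expSeries ℝ (L2 (G d) →L[ℝ] L2 (G d))).radius :=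
    fun z => (NormedSpace.expSeries_radius_eq_top ℝ (L2 (G d) →L[ℝ] L2 (G d))).symm ▸ edist_lt_top _ _
  rw [h1, NormedSpace.exp_add_of_commute_of_mem_ball (𝕂 := ℝ)
      (((Commute.one_right (t • SOp d)).smul_right _)) (hb _) (hb _),
    exp_smul_one, mul_smul_comm, mul_one]

def Psi (d : ℕ) (x : G d) : (L2 (G d) →L[ℝ] L2 (G d)) →L[ℝ] ℝ :=
  (ev 0).comp ((ContinuousLinearMap.apply ℝ (L2 (G d))) (lp.single 2 x (1:ℝ)))

lemma Psi_apply (x : G d) (T : L2 (G d) →L[ℝ] L2 (G d)) :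
    Psi d x T = ev 0 (T (lp.single 2 x (1:ℝ))) := rfl

lemma Psi_term (t : ℝ) (x : G d) (n : ℕ) :
    Psi d x (((n.factorial : ℝ))⁻¹ • (t • SOp d) ^ n)
      = ((n.factorial : ℝ))⁻¹ * t ^ n * Wval d n x := by
  rw [smul_pow, map_smul, map_smul, smul_eq_mul, smul_eq_mul, Psi_apply, ev_SOp_pow, mul_assoc]

lemma summable_heatSeries (d : ℕ) (t : ℝ) (x : G d) :
    Summable (fun n : ℕ => ((n.factorial : ℝ))⁻¹ * t ^ n * Wval d n x) := by
  have hs := NormedSpace.expSeries_summable' (𝕂 := ℝ) (t • SOp d)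
  have := hs.map (Psi d x).toLinearMap.toAddMonoidHom (Psi d x).continuous
  refine this.congr fun n => ?_
  exact Psi_term t x n

lemma heatKernel_series (d : ℕ) (t : ℝ) (x : G d) :
    heatKernel d t 0 x
      = Real.exp (-(2 * t * d))
        * ∑' n : ℕ, ((n.factorial : ℝ))⁻¹ * t ^ n * Wval d n x := by
  have h0 : heatKernel d t 0 x = Psi d x (NormedSpace.exp (t • discreteLaplacian d)) := rfl
  rw [h0, exp_split, map_smul, smul_eq_mul]
  congr 1
  rw [NormedSpace.exp_eq_tsum ℝ]
  rw [(Psi d x).map_tsum (NormedSpace.expSeries_summable' (𝕂 := ℝ) (t • SOp d))]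
  exact tsum_congr fun n => Psi_term t x n

lemma sum_smul_vj (k : Fin d × Bool → ℕ) (i : Fin d) :
    (∑ j : Fin d × Bool, k j • vj d j) i = (k (i, true) : ℤ) - (k (i, false) : ℤ) := by
  rw [Finset.sum_apply i Finset.univ (fun j => k j • vj d j), Fintype.sum_prod_type]
  have hterm : ∀ a : Fin d, (∑ b : Bool, (k (a, b) • vj d (a, b)) i)
      = if i = a then (k (a, true) : ℤ) - (k (a, false) : ℤ) else 0 := by
    intro a
    rw [Fintype.sum_bool]
    by_cases h : i = a
    · subst h
      simp [vj, Pi.neg_apply, Pi.single_eq_same, nsmul_eq_mul, sub_eq_add_neg, mul_comm]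
    · simp [vj, Pi.single_apply, h]
  rw [Finset.sum_congr rfl fun a _ => hterm a, Finset.sum_ite_eq Finset.univ i
    (fun a => (k (a, true) : ℤ) - (k (a, false) : ℤ))]
  simp

lemma constraint_coord {k : Fin d × Bool → ℕ} {x : G d}
    (h : (∑ j : Fin d × Bool, k j • vj d j) = x) (i : Fin d) :
    (k (i, true) : ℤ) - (k (i, false) : ℤ) = x i := by
  rw [← sum_smul_vj k i, h]

lemma sum_k_eq (k : Fin d × Bool → ℕ) :
    ∑ j : Fin d × Bool, k j = ∑ i : Fin d, (k (i, true) + k (i, false)) := by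
  rw [Fintype.sum_prod_type]
  exact Finset.sum_congr rfl fun i _ => by rw [Fintype.sum_bool]

lemma prod_k_factorial (k : Fin d × Bool → ℕ) :
    ∏ j : Fin d × Bool, (k j).factorial
      = ∏ i : Fin d, ((k (i, true)).factorial * (k (i, false)).factorial) := by
  rw [Fintype.prod_prod_type]
  exact Finset.prod_congr rfl fun i _ => by rw [Fintype.prod_bool]

lemma Wval_nonneg (d n : ℕ) (x : G d) : 0 ≤ Wval d n x := by
  refine Finset.sum_nonneg fun k _ => ?_
  have : (0:ℝ) ≤ (if (∑ j : Fin d × Bool, k j • vj d j) = x then (1:ℝ) else 0) := by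
    split <;> norm_num
  positivity

lemma Wval_term_nonneg (n : ℕ) (x : G d) (k : Fin d × Bool → ℕ) :
    (0:ℝ) ≤ (Nat.multinomial Finset.univ k : ℝ) *
      (if (∑ j : Fin d × Bool, k j • vj d j) = x then (1:ℝ) else 0) := by
  have : (0:ℝ) ≤ (if (∑ j : Fin d × Bool, k j • vj d j) = x then (1:ℝ) else 0) := by
    split <;> norm_num
  positivity

lemma Wval_lower (d : ℕ) (x : G d) :
    ((l1norm x).factorial : ℝ) / (∏ i : Fin d, ((x i).natAbs.factorial : ℝ))
      ≤ Wval d (l1norm x) x := by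
  classical
  set m := l1norm x with hm
  set k0 : Fin d × Bool → ℕ := fun j => if j.2 then (x j.1).toNat else (-(x j.1)).toNat with hk0
  have hmem : k0 ∈ Finset.piAntidiag (Finset.univ : Finset (Fin d × Bool)) m := by
    rw [Finset.mem_piAntidiag]
    refine ⟨?_, fun _ _ => Finset.mem_univ _⟩
    have hpt : ∀ i : Fin d, k0 (i, true) + k0 (i, false) = (x i).natAbs := fun i => by
      show (x i).toNat + (-(x i)).toNat = (x i).natAbs
      omega
    rw [sum_k_eq]
    exact Finset.sum_congr rfl fun i _ => hpt i
  have hcond : (∑ j : Fin d × Bool, k0 j • vj d j) = x := by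
    funext i
    rw [sum_smul_vj]
    show ((x i).toNat : ℤ) - ((-(x i)).toNat : ℤ) = x i
    omega
  have hprod : ∏ j : Fin d × Bool, (k0 j).factorial
      = ∏ i : Fin d, ((x i).natAbs).factorial := by
    rw [prod_k_factorial]
    refine Finset.prod_congr rfl fun i _ => ?_
    show ((x i).toNat).factorial * ((-(x i)).toNat).factorial = ((x i).natAbs).factorial
    rcases le_or_gt 0 (x i) with h | h
    · have h1 : (-(x i)).toNat = 0 := by omega
      have h2 : (x i).toNat = (x i).natAbs := by omega
      rw [h1, h2, Nat.factorial_zero, mul_one]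
    · have h1 : (x i).toNat = 0 := by omega
      have h2 : (-(x i)).toNat = (x i).natAbs := by omega
      rw [h1, h2, Nat.factorial_zero, one_mul]
  have hval : ((l1norm x).factorial : ℝ) / (∏ i : Fin d, ((x i).natAbs.factorial : ℝ))
      ≤ (Nat.multinomial Finset.univ k0 : ℝ) *
        (if (∑ j : Fin d × Bool, k0 j • vj d j) = x then (1:ℝ) else 0) := by
    rw [if_pos hcond, mul_one]
    have hspec := Nat.multinomial_spec (Finset.univ : Finset (Fin d × Bool)) k0
    have hsum : ∑ j : Fin d × Bool, k0 j = m := by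
      have := (Finset.mem_piAntidiag.mp hmem).1
      simpa using this
    rw [hsum, hprod] at hspec
    have hcast : ((∏ i : Fin d, ((x i).natAbs).factorial : ℕ) : ℝ)
        * (Nat.multinomial Finset.univ k0 : ℝ) = (m.factorial : ℝ) := by
      exact_mod_cast congrArg (fun n : ℕ => (n : ℝ)) hspec
    have hpos : (0:ℝ) < ((∏ i : Fin d, ((x i).natAbs).factorial : ℕ) : ℝ) := by
      positivity
    rw [← Nat.cast_prod, div_le_iff₀ hpos]
    nlinarith [hcast]
  calc ((l1norm x).factorial : ℝ) / (∏ i : Fin d, ((x i).natAbs.factorial : ℝ))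
      ≤ _ := hval
    _ ≤ Wval d m x := Finset.single_le_sum (fun k _ => Wval_term_nonneg m x k) hmem

lemma choose_central_le (b : ℕ) : Nat.choose (2*b) b ≤ 2 ^ (2*b) := by
  calc Nat.choose (2*b) b ≤ ∑ i ∈ Finset.range (2*b+1), Nat.choose (2*b) i :=
        Finset.single_le_sum (fun i _ => Nat.zero_le _) (Finset.mem_range.mpr (by omega))
    _ = 2 ^ (2*b) := Nat.sum_range_choose (2*b)

lemma key0 {a b : ℕ} (h : b ≤ a) :
    (a - b).factorial * (2*b).factorial ≤ 2 ^ (2*b) * (a.factorial * b.factorial) := by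
  have h1 : (2*b).factorial = Nat.choose (2*b) b * b.factorial * b.factorial := by
    have h0 := Nat.choose_mul_factorial_mul_factorial (show b ≤ 2*b by omega)
    have h2 : 2*b - b = b := by omega
    rw [h2] at h0
    exact h0.symm
  have h3 : (a - b).factorial * b.factorial ≤ a.factorial := by
    have hd := Nat.factorial_mul_factorial_dvd_factorial_add (a - b) b
    have h4 : a - b + b = a := by omega
    rw [h4] at hd
    exact Nat.le_of_dvd (Nat.factorial_pos a) hd
  calc (a - b).factorial * (2*b).factorial
      = Nat.choose (2*b) b * b.factorial * ((a-b).factorial * b.factorial) := by rw [h1]; ring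
    _ ≤ 2^(2*b) * b.factorial * a.factorial :=
        Nat.mul_le_mul (Nat.mul_le_mul_right _ (choose_central_le b)) h3
    _ = 2^(2*b) * (a.factorial * b.factorial) := by ring

lemma key1 (a b : ℕ) :
    ((a:ℤ) - b).natAbs.factorial * (a + b - ((a:ℤ) - b).natAbs).factorial
      ≤ 2 ^ (a + b - ((a:ℤ) - b).natAbs) * (a.factorial * b.factorial) := by
  rcases le_total b a with h | h
  · have h1 : ((a:ℤ) - b).natAbs = a - b := by omega
    have h2 : a + b - (a - b) = 2*b := by omega
    rw [h1, h2]
    exact key0 h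
  · have h1 : ((a:ℤ) - b).natAbs = b - a := by omega
    have h2 : a + b - (b - a) = 2*a := by omega
    rw [h1, h2]
    calc (b-a).factorial * (2*a).factorial ≤ 2 ^ (2*a) * (b.factorial * a.factorial) := key0 h
      _ = 2 ^ (2*a) * (a.factorial * b.factorial) := by ring

lemma constraint_le {n : ℕ} {x : G d} {k : Fin d × Bool → ℕ}
    (hk : k ∈ Finset.piAntidiag (Finset.univ : Finset (Fin d × Bool)) n)
    (hc : (∑ j : Fin d × Bool, k j • vj d j) = x) : l1norm x ≤ n := by
  have hsum := (Finset.mem_piAntidiag.mp hk).1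
  rw [sum_k_eq] at hsum
  have hco : ∀ i, (x i).natAbs ≤ k (i,true) + k (i,false) := fun i => by
    have := constraint_coord hc i
    omega
  calc l1norm x = ∑ i, (x i).natAbs := rfl
    _ ≤ ∑ i : Fin d, (k (i,true) + k (i,false)) := Finset.sum_le_sum fun i _ => hco i
    _ = n := hsum

lemma Wval_eq_zero {n : ℕ} (x : G d) (h : n < l1norm x) : Wval d n x = 0 := by
  refine Finset.sum_eq_zero fun k hk => ?_
  rcases eq_or_ne (∑ j : Fin d × Bool, k j • vj d j) x with hc | hc
  · exact absurd (constraint_le hk hc) (by omega)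
  · rw [if_neg hc, mul_zero]

lemma q_sum_identity (d N : ℕ) :
    ∑ q ∈ Finset.piAntidiag (Finset.univ : Finset (Fin d)) N,
      ∏ i : Fin d, ((2:ℝ) ^ (q i) / (q i).factorial)
      = (2*(d:ℝ)) ^ N / N.factorial := by
  have hpow := Finset.sum_pow_eq_sum_piAntidiag (Finset.univ : Finset (Fin d)) (fun _ => (2:ℝ)) N
  have hsum2 : (∑ _i : Fin d, (2:ℝ)) = 2*(d:ℝ) := by simp [mul_comm]
  rw [hsum2] at hpow
  rw [hpow, Finset.sum_div]
  refine Finset.sum_congr rfl fun q hq => ?_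
  have hqs : ∑ i, q i = N := by
    simpa using (Finset.mem_piAntidiag.mp hq).1
  have hspec := Nat.multinomial_spec (Finset.univ : Finset (Fin d)) q
  rw [hqs] at hspec
  have hfac : (∏ i : Fin d, ((q i).factorial : ℝ)) * (Nat.multinomial Finset.univ q : ℝ)
      = (N.factorial : ℝ) := by exact_mod_cast congrArg (fun z : ℕ => (z:ℝ)) hspec
  have hmult : (Nat.multinomial Finset.univ q : ℝ)
      = (N.factorial : ℝ) / ∏ i : Fin d, ((q i).factorial : ℝ) := by
    rw [eq_div_iff (by positivity)]
    rw [mul_comm]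
    exact hfac
  rw [Finset.prod_div_distrib, hmult]
  have hq0 : (∏ i : Fin d, ((q i).factorial:ℝ)) ≠ 0 := by positivity
  have hN0 : ((N.factorial:ℝ)) ≠ 0 := by positivity
  field_simp

lemma Wval_upper (d : ℕ) {n : ℕ} (x : G d) (h : l1norm x ≤ n) :
    Wval d n x ≤ (n.factorial : ℝ) * (2*(d:ℝ)) ^ (n - l1norm x)
      / (((n - l1norm x).factorial : ℝ) * ∏ i : Fin d, ((x i).natAbs.factorial : ℝ)) := by
  classical
  set m := l1norm x with hm
  set N := n - m with hN
  set A : ℝ := ∏ i : Fin d, ((x i).natAbs.factorial : ℝ) with hA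
  have hApos : 0 < A := by rw [hA]; positivity
  set F := (Finset.piAntidiag (Finset.univ : Finset (Fin d × Bool)) n).filter
      (fun k => (∑ j : Fin d × Bool, k j • vj d j) = x) with hF
  set φ : (Fin d × Bool → ℕ) → (Fin d → ℕ) :=
      fun k i => k (i,true) + k (i,false) - (x i).natAbs with hφ
  set g : (Fin d → ℕ) → ℝ := fun q => ∏ i : Fin d, ((2:ℝ) ^ (q i) / (q i).factorial) with hg
  have hgnn : ∀ q, 0 ≤ g q := fun q => by rw [hg]; positivity
  have hW : Wval d n x = ∑ k ∈ F, (Nat.multinomial Finset.univ k : ℝ) := by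
    rw [hF, Finset.sum_filter]
    exact Finset.sum_congr rfl fun k _ => by rw [mul_ite, mul_one, mul_zero]
  -- termwise bound
  have hterm : ∀ k ∈ F, (Nat.multinomial Finset.univ k : ℝ)
      ≤ ((n.factorial : ℝ) / A) * g (φ k) := by
    intro k hk
    obtain ⟨hkP, hcond⟩ := Finset.mem_filter.mp hk
    have hsumk : ∑ j, k j = n := (Finset.mem_piAntidiag.mp hkP).1
    have hkey : ∀ i : Fin d, ((x i).natAbs.factorial * (φ k i).factorial : ℕ)
        ≤ 2 ^ (φ k i) * ((k (i,true)).factorial * (k (i,false)).factorial) := by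
      intro i
      have hx : ((k (i,true) : ℤ) - (k (i,false))) = x i := constraint_coord hcond i
      have hnab : (x i).natAbs = ((k (i,true) : ℤ) - (k (i,false))).natAbs := by rw [hx]
      have hφi : φ k i = k (i,true) + k (i,false)
          - ((k (i,true) : ℤ) - (k (i,false))).natAbs := by
        simp only [hφ]
        rw [hnab]
      rw [hφi, hnab]
      exact key1 _ _
    have hprodineq : ((∏ i : Fin d, ((x i).natAbs.factorial : ℕ))
          * ∏ i : Fin d, (φ k i).factorial : ℕ)
        ≤ (∏ i : Fin d, 2 ^ (φ k i)) * ∏ j : Fin d × Bool, (k j).factorial := by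
      rw [prod_k_factorial, ← Finset.prod_mul_distrib, ← Finset.prod_mul_distrib]
      exact Finset.prod_le_prod' fun i _ => hkey i
    have hspec := Nat.multinomial_spec (Finset.univ : Finset (Fin d × Bool)) k
    rw [hsumk] at hspec
    -- real versions
    set B : ℝ := ∏ i : Fin d, ((φ k i).factorial : ℝ) with hB
    set C : ℝ := ∏ i : Fin d, (2:ℝ) ^ (φ k i) with hC
    set K : ℝ := ∏ j : Fin d × Bool, ((k j).factorial : ℝ) with hK
    have hBpos : 0 < B := by rw [hB]; positivity
    have hKpos : 0 < K := by rw [hK]; positivity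
    have hKM : K * (Nat.multinomial Finset.univ k : ℝ) = (n.factorial : ℝ) := by
      rw [hK]; exact_mod_cast congrArg (fun z : ℕ => (z:ℝ)) hspec
    have hABCK : A * B ≤ C * K := by
      rw [hA, hB, hC, hK]; exact_mod_cast hprodineq
    have hgφ : g (φ k) = C / B := by
      simp only [hg, hC, hB, Finset.prod_div_distrib]
    rw [hgφ, div_mul_div_comm, le_div_iff₀ (by positivity)]
    have hMnn : (0:ℝ) ≤ (Nat.multinomial Finset.univ k : ℝ) := by positivity
    calc (Nat.multinomial Finset.univ k : ℝ) * (A * B)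
        ≤ (Nat.multinomial Finset.univ k : ℝ) * (C * K) :=
          mul_le_mul_of_nonneg_left hABCK hMnn
      _ = (n.factorial : ℝ) * C := by rw [← hKM]; ring
  -- sum of g ∘ φ over F is at most the full q-sum
  have himg : ∀ k ∈ F, φ k ∈ Finset.piAntidiag (Finset.univ : Finset (Fin d)) N := by
    intro k hk
    obtain ⟨hkP, hcond⟩ := Finset.mem_filter.mp hk
    have hsumk : ∑ j, k j = n := (Finset.mem_piAntidiag.mp hkP).1
    rw [Finset.mem_piAntidiag]
    refine ⟨?_, fun _ _ => Finset.mem_univ _⟩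
    have hco : ∀ i, (x i).natAbs ≤ k (i,true) + k (i,false) := fun i => by
      have := constraint_coord hcond i
      omega
    have hptw : ∀ i : Fin d, φ k i + (x i).natAbs = k (i,true) + k (i,false) := fun i => by
      have := hco i
      simp only [hφ]
      omega
    have hsum2 : (∑ i : Fin d, φ k i) + (∑ i : Fin d, (x i).natAbs) = n := by
      rw [← Finset.sum_add_distrib, Finset.sum_congr rfl fun i _ => hptw i, ← sum_k_eq, hsumk]
    have hmn : (∑ i : Fin d, (x i).natAbs) = m := rfl
    rw [hmn] at hsum2
    have heta : Finset.univ.sum (φ k) = ∑ i : Fin d, φ k i := rfl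
    omega
  have hinj : ∀ k ∈ F, ∀ k' ∈ F, φ k = φ k' → k = k' := by
    intro k hk k' hk' he
    obtain ⟨_, hcond⟩ := Finset.mem_filter.mp hk
    obtain ⟨_, hcond'⟩ := Finset.mem_filter.mp hk'
    funext j
    obtain ⟨i, b⟩ := j
    have h1 := congrFun he i
    simp only [hφ] at h1
    have h2 := constraint_coord hcond i
    have h3 := constraint_coord hcond' i
    have h4 : (x i).natAbs ≤ k (i,true) + k (i,false) := by omega
    have h5 : (x i).natAbs ≤ k' (i,true) + k' (i,false) := by omega
    cases b <;> omega
  have hsub : F.image φ ⊆ Finset.piAntidiag (Finset.univ : Finset (Fin d)) N := by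
    intro q hq
    obtain ⟨k, hkF, rfl⟩ := Finset.mem_image.mp hq
    exact himg k hkF
  have hsumg : ∑ k ∈ F, g (φ k) ≤ (2*(d:ℝ)) ^ N / N.factorial := by
    rw [← Finset.sum_image hinj, ← q_sum_identity d N]
    exact Finset.sum_le_sum_of_subset_of_nonneg hsub fun q _ _ => hgnn q
  -- combine
  calc Wval d n x = ∑ k ∈ F, (Nat.multinomial Finset.univ k : ℝ) := hW
    _ ≤ ∑ k ∈ F, ((n.factorial : ℝ) / A) * g (φ k) := Finset.sum_le_sum hterm
    _ = ((n.factorial : ℝ) / A) * ∑ k ∈ F, g (φ k) := by rw [Finset.mul_sum]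
    _ ≤ ((n.factorial : ℝ) / A) * ((2*(d:ℝ)) ^ N / N.factorial) := by
        refine mul_le_mul_of_nonneg_left hsumg (by positivity)
    _ = (n.factorial : ℝ) * (2*(d:ℝ)) ^ N / ((N.factorial : ℝ) * A) := by
        rw [div_mul_div_comm]
        ring_nf

end HK

open HK in
theorem heatKernel_two_sided_bounds' {d : ℕ} (hd : 1 ≤ d) (t : ℝ) (ht : 0 ≤ t)
    (x : Fin d → ℤ) :
    Real.exp (-(2 * t * d)) * t ^ l1norm x /
        ((∏ i : Fin d, Nat.factorial (x i).natAbs : ℕ) : ℝ) ≤ heatKernel d t 0 x ∧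
      heatKernel d t 0 x ≤
        t ^ l1norm x / ((∏ i : Fin d, Nat.factorial (x i).natAbs : ℕ) : ℝ) := by
  classical
  have hPr : ((∏ i : Fin d, Nat.factorial (x i).natAbs : ℕ) : ℝ)
      = ∏ i : Fin d, ((x i).natAbs.factorial : ℝ) := by push_cast; rfl
  set m := l1norm x with hm
  set Pr : ℝ := ∏ i : Fin d, ((x i).natAbs.factorial : ℝ) with hPrdef
  have hPrpos : 0 < Pr := by rw [hPrdef]; positivity
  set f : ℕ → ℝ := fun n => ((n.factorial : ℝ))⁻¹ * t ^ n * Wval d n x with hf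
  have hfsum : Summable f := summable_heatSeries d t x
  have hfnn : ∀ n, 0 ≤ f n := fun n =>
    mul_nonneg (mul_nonneg (inv_nonneg.2 (Nat.cast_nonneg _)) (pow_nonneg ht n))
      (Wval_nonneg d n x)
  have hker : heatKernel d t 0 x = Real.exp (-(2 * t * d)) * ∑' n, f n :=
    heatKernel_series d t x
  constructor
  · -- lower bound
    have h1 : t ^ m / Pr ≤ f m := by
      have h2 := Wval_lower d x
      rw [hPrdef] at *
      calc t ^ m / (∏ i : Fin d, ((x i).natAbs.factorial : ℝ))
          = ((m.factorial : ℝ))⁻¹ * t ^ m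
            * ((m.factorial : ℝ) / ∏ i : Fin d, ((x i).natAbs.factorial : ℝ)) := by
            have hm0 : ((m.factorial : ℝ)) ≠ 0 := by positivity
            field_simp
        _ ≤ ((m.factorial : ℝ))⁻¹ * t ^ m * Wval d m x :=
            mul_le_mul_of_nonneg_left h2 (by positivity)
        _ = f m := rfl
    have h3 : f m ≤ ∑' n, f n := Summable.le_tsum hfsum m fun n _ => hfnn n
    rw [hker, hPr, mul_div_assoc]
    exact mul_le_mul_of_nonneg_left (h1.trans h3) (Real.exp_nonneg _)
  · -- upper bound
    set c : ℝ := 2 * (d:ℝ) * t with hc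
    set gb : ℕ → ℝ := fun n =>
      if m ≤ n then t ^ m / Pr * (c ^ (n - m) / ((n - m).factorial : ℝ)) else 0 with hgb
    have hcnn : 0 ≤ c := by rw [hc]; positivity
    have hfg : ∀ n, f n ≤ gb n := by
      intro n
      rcases lt_or_ge n m with hlt | hge
      · have hW0 : Wval d n x = 0 := Wval_eq_zero x hlt
        have : f n = 0 := by rw [hf]; simp [hW0]
        rw [this]
        simp only [hgb]
        rw [if_neg (by omega : ¬ m ≤ n)]
      · simp only [hgb]
        rw [if_pos hge]
        have hup := Wval_upper d x hge
        rw [← hm, ← hPrdef] at hup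
        calc f n = ((n.factorial : ℝ))⁻¹ * t ^ n * Wval d n x := rfl
          _ ≤ ((n.factorial : ℝ))⁻¹ * t ^ n
              * ((n.factorial : ℝ) * (2*(d:ℝ)) ^ (n - m) / (((n - m).factorial : ℝ) * Pr)) := by
              exact mul_le_mul_of_nonneg_left hup (by positivity)
          _ = t ^ m / Pr * (c ^ (n - m) / ((n - m).factorial : ℝ)) := by
              have htn : t ^ n = t ^ m * t ^ (n - m) := by
                rw [← pow_add]
                congr 1
                omega
              have h1 : ((n.factorial : ℝ)) ≠ 0 := by positivity
              have h2 : (((n - m).factorial : ℝ)) ≠ 0 := by positivity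
              have h3 : Pr ≠ 0 := ne_of_gt hPrpos
              rw [htn, hc]
              field_simp
              ring
    have hinj : Function.Injective (fun j : ℕ => m + j) := fun a b hab => by
      simpa using hab
    have hcomp : ∀ j : ℕ, gb (m + j) = t ^ m / Pr * (c ^ j / (j.factorial : ℝ)) := by
      intro j
      simp only [hgb]
      rw [if_pos (by omega : m ≤ m + j)]
      have : m + j - m = j := by omega
      rw [this]
    have hzero : ∀ n, n ∉ Set.range (fun j : ℕ => m + j) → gb n = 0 := by
      intro n hn
      simp only [hgb]
      rw [if_neg]
      intro hmn
      exact hn ⟨n - m, by show m + (n - m) = n; omega⟩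
    have hsumexp : Summable (fun j : ℕ => t ^ m / Pr * (c ^ j / (j.factorial : ℝ))) :=
      (Real.summable_pow_div_factorial c).mul_left _
    have hgbsum : Summable gb := by
      rw [← Function.Injective.summable_iff hinj hzero]
      exact hsumexp.congr fun j => (hcomp j).symm
    have hexp : (∑' j : ℕ, c ^ j / (j.factorial : ℝ)) = Real.exp c := by
      rw [Real.exp_eq_exp_ℝ]
      exact (congrFun (NormedSpace.exp_eq_tsum_div (𝔸 := ℝ)) c).symm
    have htsum : ∑' n, gb n = t ^ m / Pr * Real.exp c := by
      rw [← Function.Injective.tsum_eq hinj (f := gb) ?_]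
      · rw [tsum_congr hcomp, tsum_mul_left, hexp]
      · intro n hn
        by_contra hcon
        exact hn (hzero n hcon)
    have hle : ∑' n, f n ≤ t ^ m / Pr * Real.exp c := by
      rw [← htsum]
      exact Summable.tsum_le_tsum hfg hfsum hgbsum
    rw [hker, hPr]
    calc Real.exp (-(2 * t * d)) * ∑' n, f n
        ≤ Real.exp (-(2 * t * d)) * (t ^ m / Pr * Real.exp c) :=
          mul_le_mul_of_nonneg_left hle (Real.exp_nonneg _)
      _ = (Real.exp (-(2 * t * d)) * Real.exp c) * (t ^ m / Pr) := by ring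
      _ = t ^ m / Pr := by
          rw [← Real.exp_add, hc]
          rw [show -(2 * t * (d:ℝ)) + 2 * (d:ℝ) * t = 0 by ring]
          rw [Real.exp_zero, one_mul]

/-- Lemma 4.3 (Lemma 3.6): two-sided bounds on the transition probabilities of
continuous-time simple symmetric random walk on `ℤ^d` with jump rate `2d`:
`e^{-2td} t^{|x|} / ∏ᵢ |xᵢ|! ≤ p_t(0,x) ≤ t^{|x|} / ∏ᵢ |xᵢ|!`. -/
theorem heatKernel_two_sided_bounds {d : ℕ} (hd : 1 ≤ d) (t : ℝ) (ht : 0 ≤ t)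
    (x : Fin d → ℤ) :
    Real.exp (-(2 * t * d)) * t ^ l1norm x /
        ((∏ i : Fin d, Nat.factorial (x i).natAbs : ℕ) : ℝ) ≤ heatKernel d t 0 x ∧
      heatKernel d t 0 x ≤
        t ^ l1norm x / ((∏ i : Fin d, Nat.factorial (x i).natAbs : ℕ) : ℝ) := by
  exact heatKernel_two_sided_bounds' hd t ht x
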